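/- Let D be a drawing style and b > 1, x = 1/(b−1). Suppose that for arbitrarily large n there exist n-vertex multigraphs in drawing style D with e = Θ(n^b) edges in which any two edges cross at most a constant number C of times. Then the crossing number of such a multigraph is O(n^{2b}), while e^{x+2}/n^{x+1} = Θ(n^{2b}); hence the lower bound cr(G) ≥ α·e^{x+2}/n^{x+1} of the Generalized Crossing Lemma is asymptotically tight for drawing style D. -/

import Mathlib

open Set

/-- A topological multigraph drawn in the plane: `n` vertices represented by distinct
points `vpos`, and `m` edges (no loops, parallel edges allowed), where edge `i` connects
the vertices `ends i` and is represented by the simple continuous arc `arc i` (parametrized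
over `[0,1]`).  The drawing is in general position: (a) no vertex is an interior point of
any edge; (b) any two edges intersect in finitely many points (and all common interior
points are proper crossings); (d) no three edges cross at a common point. -/
structure TopMultigraph where
  n : ℕ
  m : ℕ
  vpos : Fin n → ℝ × ℝ
  vinj : Function.Injective vpos
  ends : Fin m → Fin n × Fin n
  noLoop : ∀ i, (ends i).1 ≠ (ends i).2
  arc : Fin m → ℝ → ℝ × ℝ
  arc_cont : ∀ i, ContinuousOn (arc i) (Icc 0 1)
  arc_inj : ∀ i, InjOn (arc i) (Icc 0 1)
  arc_src : ∀ i, arc i 0 = vpos (ends i).1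
  arc_tgt : ∀ i, arc i 1 = vpos (ends i).2
  no_vertex_interior : ∀ i, ∀ t ∈ Ioo (0:ℝ) 1, ∀ v, arc i t ≠ vpos v
  finite_intersections : ∀ i j, i ≠ j →
    ((arc i '' Icc 0 1) ∩ (arc j '' Icc 0 1)).Finite
  no_triple : ∀ i j k, i ≠ j → j ≠ k → i ≠ k → ∀ p : ℝ × ℝ,
    ¬(p ∈ arc i '' Ioo 0 1 ∧ p ∈ arc j '' Ioo 0 1 ∧ p ∈ arc k '' Ioo 0 1)

namespace TopMultigraph

variable (G : TopMultigraph)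

/-- The (closed) point set of edge `i`. -/
def edgeCurve (i : Fin G.m) : Set (ℝ × ℝ) := G.arc i '' Icc 0 1

/-- The set of interior points of edge `i`. -/
def edgeInterior (i : Fin G.m) : Set (ℝ × ℝ) := G.arc i '' Ioo 0 1

/-- Two edges are parallel if they connect the same pair of vertices. -/
def Parallel (i j : Fin G.m) : Prop :=
  G.ends i = G.ends j ∨ G.ends i = ((G.ends j).2, (G.ends j).1)

/-- Two edges are adjacent if they share an endpoint. -/
def Adjacent (i j : Fin G.m) : Prop :=
  (G.ends i).1 = (G.ends j).1 ∨ (G.ends i).1 = (G.ends j).2 ∨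
  (G.ends i).2 = (G.ends j).1 ∨ (G.ends i).2 = (G.ends j).2

/-- Two distinct edges cross if they share an interior point (by general position,
every common interior point is a proper crossing). -/
def Crosses (i j : Fin G.m) : Prop :=
  i ≠ j ∧ (G.edgeInterior i ∩ G.edgeInterior j).Nonempty

/-- The set of crossing points of the drawing. -/
def crossingSet : Set (ℝ × ℝ) :=
  {p | ∃ i j : Fin G.m, i ≠ j ∧ p ∈ G.edgeInterior i ∧ p ∈ G.edgeInterior j}

/-- The crossing number: the number of crossing points of the drawing. -/
noncomputable def cr : ℕ := G.crossingSet.ncard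

/-- The drawing is crossing-free if no two edges cross. -/
def CrossingFree : Prop := G.crossingSet = ∅

/-- The degree of a vertex: the number of edges incident to it. -/
def degree (v : Fin G.n) : ℕ :=
  (Finset.univ.filter fun i => (G.ends i).1 = v ∨ (G.ends i).2 = v).card

/-- The maximum degree `Δ(G)`. -/
def maxDegree : ℕ := Finset.univ.sup G.degree

/-- A topological multigraph is separated if any pair of parallel edges forms a simple
closed curve (they meet exactly in their two common endpoints) having at least one vertex
in its interior and at least one vertex in its exterior (i.e. there are two vertices
off the curve lying in different connected components of its complement). -/
def Separated : Prop :=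
  ∀ i j : Fin G.m, i ≠ j → G.Parallel i j →
    (G.edgeCurve i ∩ G.edgeCurve j
        = {G.vpos (G.ends i).1, G.vpos (G.ends i).2}) ∧
    ∃ u w : Fin G.n,
      G.vpos u ∉ G.edgeCurve i ∪ G.edgeCurve j ∧
      G.vpos w ∉ G.edgeCurve i ∪ G.edgeCurve j ∧
      G.vpos w ∉ connectedComponentIn (G.edgeCurve i ∪ G.edgeCurve j)ᶜ (G.vpos u)

/-- A topological multigraph is locally starlike if no two adjacent edges cross. -/
def LocallyStarlike : Prop :=
  ∀ i j : Fin G.m, G.Adjacent i j → ¬G.Crosses i j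

/-- Edge multiplicity at most `k`: no `k+1` pairwise parallel edges. -/
def MultiplicityAtMost (k : ℕ) : Prop :=
  ∀ S : Finset (Fin G.m), (∀ i ∈ S, ∀ j ∈ S, G.Parallel i j) → S.card ≤ k

/-- The multigraph has no parallel edges (it is a topological graph). -/
def Simple : Prop := ∀ i j : Fin G.m, G.Parallel i j → i = j

/-- The multigraph contains a cycle of length `k`: `k` distinct vertices cyclically
joined by edges. -/
def HasCycleOfLength (k : ℕ) : Prop :=
  ∃ v : ZMod k → Fin G.n, Function.Injective v ∧
    ∀ a : ZMod k, ∃ i : Fin G.m,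
      G.ends i = (v a, v (a + 1)) ∨ G.ends i = (v (a + 1), v a)

/-- The sub-multigraph of `G` induced by the vertices in `A`, keeping exactly those
edges of `S` whose endpoints both lie in `A`, with the inherited drawing. -/
def inducedSub (A : Finset (Fin G.n)) (S : Finset (Fin G.m)) : TopMultigraph :=
  let T : Finset (Fin G.m) := S.filter fun i => (G.ends i).1 ∈ A ∧ (G.ends i).2 ∈ A
  let ev : Fin A.card ≃o {x // x ∈ A} := A.orderIsoOfFin rfl
  let ee : Fin T.card ≃o {x // x ∈ T} := T.orderIsoOfFin rfl
  have hend : ∀ i : Fin T.card, (G.ends (ee i).1).1 ∈ A ∧ (G.ends (ee i).1).2 ∈ A :=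
    fun i => (Finset.mem_filter.mp (ee i).2).2
  have heinj : ∀ i j : Fin T.card, (ee i).1 = (ee j).1 → i = j :=
    fun i j h => ee.injective (Subtype.ext h)
  { n := A.card
    m := T.card
    vpos := fun v => G.vpos (ev v).1
    vinj := fun a b h => ev.injective (Subtype.ext (G.vinj h))
    ends := fun i => (ev.symm ⟨(G.ends (ee i).1).1, (hend i).1⟩,
                      ev.symm ⟨(G.ends (ee i).1).2, (hend i).2⟩)
    noLoop := by
      intro i h
      have h2 := congrArg (fun x => ((ev x : {x // x ∈ A}) : Fin G.n)) h
      simp only [OrderIso.apply_symm_apply] at h2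
      exact G.noLoop (ee i).1 h2
    arc := fun i => G.arc (ee i).1
    arc_cont := fun i => G.arc_cont (ee i).1
    arc_inj := fun i => G.arc_inj (ee i).1
    arc_src := by
      intro i
      show G.arc (ee i).1 0
          = G.vpos (ev (ev.symm ⟨(G.ends (ee i).1).1, (hend i).1⟩)).1
      rw [OrderIso.apply_symm_apply]
      exact G.arc_src (ee i).1
    arc_tgt := by
      intro i
      show G.arc (ee i).1 1
          = G.vpos (ev (ev.symm ⟨(G.ends (ee i).1).2, (hend i).2⟩)).1
      rw [OrderIso.apply_symm_apply]
      exact G.arc_tgt (ee i).1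
    no_vertex_interior := fun i t ht v => G.no_vertex_interior (ee i).1 t ht (ev v).1
    finite_intersections := fun i j hij =>
      G.finite_intersections (ee i).1 (ee j).1 fun h => hij (heinj i j h)
    no_triple := fun i j k hij hjk hik p hp =>
      G.no_triple (ee i).1 (ee j).1 (ee k).1
        (fun h => hij (heinj _ _ h)) (fun h => hjk (heinj _ _ h))
        (fun h => hik (heinj _ _ h)) p hp }

/-- The multigraph obtained from `G` by removing all edges outside `S`
(keeping all vertices), with the inherited drawing. -/
def restrict (S : Finset (Fin G.m)) : TopMultigraph :=
  G.inducedSub Finset.univ S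

end TopMultigraph

/-- A drawing style: a predicate on topological multigraphs (drawings). -/
abbrev DrawingStyle := TopMultigraph → Prop

/-- A drawing style is monotone if removing edges retains the drawing style. -/
def MonotoneStyle (D : DrawingStyle) : Prop :=
  ∀ G : TopMultigraph, D G → ∀ S : Finset (Fin G.m), D (G.restrict S)

/-- `G'` is obtained from `G` by a vertex split: a vertex `v` of `G` is replaced by two
vertices (all other vertices keep their positions), each edge formerly incident to `v` is
attached to one of the two new vertices (edges and their endpoints correspond via the
bijection `σ` and the vertex identification `ψ`), and no new crossing is created. -/
def IsVertexSplit (G G' : TopMultigraph) : Prop :=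
  G'.n = G.n + 1 ∧ G'.m = G.m ∧
  ∃ (ψ : Fin G'.n → Fin G.n) (σ : Fin G'.m ≃ Fin G.m) (v : Fin G.n),
    Function.Surjective ψ ∧
    (∃ w₁ w₂ : Fin G'.n, w₁ ≠ w₂ ∧ ψ w₁ = v ∧ ψ w₂ = v) ∧
    (∀ w : Fin G'.n, ψ w ≠ v → G'.vpos w = G.vpos (ψ w)) ∧
    (∀ i : Fin G'.m, G.ends (σ i) = (ψ (G'.ends i).1, ψ (G'.ends i).2)) ∧
    (∀ i j : Fin G'.m, G'.Crosses i j → G.Crosses (σ i) (σ j)) ∧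
    G'.cr ≤ G.cr

/-- A drawing style is split-compatible if performing vertex splits retains the style. -/
def SplitCompatible (D : DrawingStyle) : Prop :=
  ∀ G G' : TopMultigraph, D G → IsVertexSplit G G' → D G'

/-- `IsVertexSplitSeq k G G'` : `G'` is obtained from `G` by `k` successive vertex splits. -/
def IsVertexSplitSeq : ℕ → TopMultigraph → TopMultigraph → Prop
  | 0 => fun G G' => G' = G
  | k + 1 => fun G G' => ∃ H : TopMultigraph, IsVertexSplit G H ∧ IsVertexSplitSeq k H G'

/-- The `D`-bisection width of a multigraph `G` in drawing style `D`: the smallest number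
of edges whose removal splits `G` into two multigraphs `G₁`, `G₂` in drawing style `D`
(with their inherited drawings) with no edge connecting them, each containing at least
`n/5` of the vertices. -/
noncomputable def bisectionWidth (D : DrawingStyle) (G : TopMultigraph) : ℕ :=
  sInf {k : ℕ | ∃ R : Finset (Fin G.m), R.card = k ∧
    ∃ A : Finset (Fin G.n),
      G.n ≤ 5 * A.card ∧ G.n ≤ 5 * Aᶜ.card ∧
      (∀ i : Fin G.m, i ∉ R → ((G.ends i).1 ∈ A ↔ (G.ends i).2 ∈ A)) ∧
      D (G.inducedSub A Rᶜ) ∧ D (G.inducedSub Aᶜ Rᶜ)}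

/-- **Tightness of the Generalized Crossing Lemma.**
Let `D` be a drawing style, `b > 1` and `x = 1/(b−1)`.  Suppose that for arbitrarily
large `n` there exist `n`-vertex multigraphs in drawing style `D` with `e = Θ(n^b)` edges
(say `c1·n^b ≤ e ≤ c2·n^b`) in which any two edges cross at most `C` times.  Then for all
such multigraphs `cr(G) = O(n^{2b})` while `e^{x+2}/n^{x+1} = Θ(n^{2b})`; hence the lower
bound `cr(G) ≥ α·e^{x+2}/n^{x+1}` of the Generalized Crossing Lemma is asymptotically
tight for `D`. -/
theorem generalized_crossing_lemma_tight
    (D : DrawingStyle) (b : ℝ) (hb : 1 < b) (C : ℕ) (c1 c2 : ℝ)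
    (hc1 : 0 < c1) (hc2 : 0 < c2)
    (hexist : ∀ N : ℕ, ∃ G : TopMultigraph, D G ∧ N ≤ G.n ∧
      c1 * (G.n : ℝ) ^ b ≤ (G.m : ℝ) ∧ (G.m : ℝ) ≤ c2 * (G.n : ℝ) ^ b ∧
      (∀ i j : Fin G.m, i ≠ j → (G.edgeInterior i ∩ G.edgeInterior j).ncard ≤ C)) :
    ∃ c3 c4 c5 : ℝ, 0 < c3 ∧ 0 < c4 ∧ 0 < c5 ∧
      ∀ G : TopMultigraph, D G → 1 ≤ G.n →
        c1 * (G.n : ℝ) ^ b ≤ (G.m : ℝ) → (G.m : ℝ) ≤ c2 * (G.n : ℝ) ^ b →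
        (∀ i j : Fin G.m, i ≠ j → (G.edgeInterior i ∩ G.edgeInterior j).ncard ≤ C) →
        (G.cr : ℝ) ≤ c3 * (G.n : ℝ) ^ (2 * b) ∧
        c4 * (G.n : ℝ) ^ (2 * b)
          ≤ (G.m : ℝ) ^ (1 / (b - 1) + 2) / (G.n : ℝ) ^ (1 / (b - 1) + 1) ∧
        (G.m : ℝ) ^ (1 / (b - 1) + 2) / (G.n : ℝ) ^ (1 / (b - 1) + 1)
          ≤ c5 * (G.n : ℝ) ^ (2 * b) := by
  classical
  have hbpos : (0:ℝ) < b - 1 := by linarith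
  set y : ℝ := 1 / (b - 1) with hy
  have hy0 : 0 < y := by positivity
  refine ⟨((C:ℝ) + 1) * c2 ^ 2, c1 ^ (y + 2), c2 ^ (y + 2),
    by positivity, by positivity, by positivity, ?_⟩
  intro G hD hn hm1 hm2 hC
  have hn0 : (0:ℝ) < (G.n:ℝ) := by exact_mod_cast Nat.lt_of_lt_of_le Nat.zero_lt_one hn
  have hm0 : (0:ℝ) ≤ (G.m:ℝ) := Nat.cast_nonneg _
  have hexp : b * (y + 2) - (y + 1) = 2 * b := by
    rw [hy]; field_simp; ring
  have hnb : (0:ℝ) < (G.n:ℝ) ^ b := Real.rpow_pos_of_pos hn0 b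
  have hnb2 : (G.n:ℝ) ^ b * (G.n:ℝ) ^ b = (G.n:ℝ) ^ (2 * b) := by
    rw [← Real.rpow_add hn0]; ring_nf
  -- crossing number bound
  have hfin : ∀ p : Fin G.m × Fin G.m,
      (if p.1 = p.2 then (∅ : Set (ℝ×ℝ))
        else G.edgeInterior p.1 ∩ G.edgeInterior p.2).Finite := by
    intro p
    split
    · exact Set.finite_empty
    · next h =>
      exact (G.finite_intersections p.1 p.2 h).subset
        (Set.inter_subset_inter (Set.image_mono Set.Ioo_subset_Icc_self)
          (Set.image_mono Set.Ioo_subset_Icc_self))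
  have hcr : G.cr ≤ C * (G.m * G.m) := by
    have hsub : G.crossingSet ⊆
        ↑(Finset.univ.biUnion fun p : Fin G.m × Fin G.m => (hfin p).toFinset) := by
      rintro q ⟨i, j, hij, hi, hj⟩
      simp only [Finset.coe_biUnion, Set.mem_iUnion, Finset.mem_coe, Finset.mem_univ,
        Set.iUnion_true]
      refine ⟨(i, j), ?_⟩
      rw [Set.Finite.mem_toFinset]
      simp only [if_neg hij]
      exact ⟨hi, hj⟩
    have h1 : G.cr ≤ (Finset.univ.biUnion
        fun p : Fin G.m × Fin G.m => (hfin p).toFinset).card := by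
      rw [← Set.ncard_coe_finset]
      exact Set.ncard_le_ncard hsub (Finset.finite_toSet _)
    have h2 : (Finset.univ.biUnion
        fun p : Fin G.m × Fin G.m => (hfin p).toFinset).card
        ≤ ∑ p : Fin G.m × Fin G.m, ((hfin p).toFinset).card :=
      Finset.card_biUnion_le
    have h3 : ∀ p : Fin G.m × Fin G.m, ((hfin p).toFinset).card ≤ C := by
      intro p
      rw [← Set.ncard_eq_toFinset_card _ (hfin p)]
      by_cases h : p.1 = p.2
      · simp [h]
      · simpa [if_neg h] using hC p.1 p.2 h
    calc G.cr ≤ ∑ p : Fin G.m × Fin G.m, ((hfin p).toFinset).card := le_trans h1 h2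
      _ ≤ ∑ _p : Fin G.m × Fin G.m, C := Finset.sum_le_sum fun p _ => h3 p
      _ = C * (G.m * G.m) := by
          simp [Finset.sum_const, Fintype.card_prod, Nat.mul_comm]
  refine ⟨?_, ?_, ?_⟩
  · calc (G.cr:ℝ) ≤ (C:ℝ) * ((G.m:ℝ) * (G.m:ℝ)) := by exact_mod_cast hcr
      _ ≤ (C:ℝ) * ((c2 * (G.n:ℝ) ^ b) * (c2 * (G.n:ℝ) ^ b)) := by
          apply mul_le_mul_of_nonneg_left _ (Nat.cast_nonneg C)
          exact mul_le_mul hm2 hm2 hm0 (by positivity)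
      _ = (C:ℝ) * c2 ^ 2 * (G.n:ℝ) ^ (2 * b) := by rw [← hnb2]; ring
      _ ≤ ((C:ℝ) + 1) * c2 ^ 2 * (G.n:ℝ) ^ (2 * b) := by
          have : (0:ℝ) < (G.n:ℝ) ^ (2 * b) := Real.rpow_pos_of_pos hn0 _
          nlinarith [sq_nonneg c2]
  · rw [le_div_iff₀ (Real.rpow_pos_of_pos hn0 _)]
    have hkey : (G.n:ℝ) ^ (2 * b) * (G.n:ℝ) ^ (y + 1) = (G.n:ℝ) ^ (b * (y + 2)) := by
      rw [← Real.rpow_add hn0]; congr 1; linarith [hexp]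
    calc c1 ^ (y + 2) * (G.n:ℝ) ^ (2 * b) * (G.n:ℝ) ^ (y + 1)
        = c1 ^ (y + 2) * (G.n:ℝ) ^ (b * (y + 2)) := by rw [mul_assoc, hkey]
      _ = (c1 * (G.n:ℝ) ^ b) ^ (y + 2) := by
          rw [Real.mul_rpow hc1.le hnb.le, ← Real.rpow_mul hn0.le]
      _ ≤ (G.m:ℝ) ^ (y + 2) := Real.rpow_le_rpow (by positivity) hm1 (by positivity)
  · rw [div_le_iff₀ (Real.rpow_pos_of_pos hn0 _)]
    have hkey : (G.n:ℝ) ^ (2 * b) * (G.n:ℝ) ^ (y + 1) = (G.n:ℝ) ^ (b * (y + 2)) := by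
      rw [← Real.rpow_add hn0]; congr 1; linarith [hexp]
    calc (G.m:ℝ) ^ (y + 2) ≤ (c2 * (G.n:ℝ) ^ b) ^ (y + 2) :=
          Real.rpow_le_rpow hm0 hm2 (by positivity)
      _ = c2 ^ (y + 2) * (G.n:ℝ) ^ (b * (y + 2)) := by
          rw [Real.mul_rpow hc2.le hnb.le, ← Real.rpow_mul hn0.le]
      _ = c2 ^ (y + 2) * (G.n:ℝ) ^ (2 * b) * (G.n:ℝ) ^ (y + 1) := by
          rw [mul_assoc, hkey]
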